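/- arXiv:1910.11203 — 3 statements merged into one kernel-verified Lean document; each statement's English description precedes it below -/
import Mathlib

section
/- Let (Ω, P) be a probability space with event A and finite nonempty pairwise-disjoint index sets L₁, L₂, L₃ with events Bᵢ (i ∈ L₁ ∪ L₂ ∪ L₃), such that A together with all Bᵢ is a mutually independent family. Then P(A ∪ ((⋃_{i∈L₁} Bᵢ) ∩ (⋃_{i∈L₂} Bᵢ)) ∪ ⋃_{i∈L₃} Bᵢ) = 1 - (1 - P(A)) · (1 - (1 - ∏_{i∈L₁}(1 - P(Bᵢ))) · (1 - ∏_{i∈L₂}(1 - P(Bᵢ)))) · ∏_{i∈L₃}(1 - P(Bᵢ)). -/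
open MeasureTheory Finset

private lemma aux_key {Ω ι : Type*} [MeasurableSpace Ω] [DecidableEq ι]
    (P : Measure Ω) [IsProbabilityMeasure P] (A : Set Ω) (B : ι → Set Ω) (L : Finset ι)
    (hB : ∀ i ∈ L, MeasurableSet (B i))
    (hindep : ∀ (TA : Finset Unit), ∀ T ⊆ L,
      (P ((⋂ _x ∈ TA, A) ∩ ⋂ i ∈ T, B i)).toReal =
        (∏ _x ∈ TA, (P A).toReal) * ∏ i ∈ T, (P (B i)).toReal)
    (TA : Finset Unit) (T : Finset ι) :
    ∀ T' : Finset ι, Disjoint T T' → T ∪ T' ⊆ L →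
      (P ((⋂ _x ∈ TA, A) ∩ ((⋂ i ∈ T, (B i)ᶜ) ∩ ⋂ i ∈ T', B i))).toReal =
        (∏ _x ∈ TA, (P A).toReal) * (∏ i ∈ T, (1 - (P (B i)).toReal)) *
          ∏ i ∈ T', (P (B i)).toReal := by
  classical
  induction T using Finset.induction_on with
  | empty =>
    intro T' _ hsub
    have hsub' : T' ⊆ L := by simpa using hsub
    have := hindep TA T' hsub'
    simpa using this
  | @insert j s hj ih =>
    intro T' hdisj hsub
    have hjL : j ∈ L := hsub (by simp)
    have hjT' : j ∉ T' := fun h => (Finset.disjoint_left.1 hdisj (by simp) h)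
    have hds : Disjoint s T' := by
      apply Finset.disjoint_left.2
      intro a ha hb
      exact Finset.disjoint_left.1 hdisj (by simp [ha]) hb
    have hds' : Disjoint s (insert j T') := by
      apply Finset.disjoint_left.2
      intro a ha hb
      rcases Finset.mem_insert.1 hb with rfl | hb
      · exact hj ha
      · exact Finset.disjoint_left.1 hds ha hb
    have hsub1 : s ∪ T' ⊆ L := fun a ha => by
      rcases Finset.mem_union.1 ha with h | h
      · exact hsub (by simp [h])
      · exact hsub (by simp [h])
    have hsub2 : s ∪ insert j T' ⊆ L := fun a ha => by
      rcases Finset.mem_union.1 ha with h | h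
      · exact hsub (by simp [h])
      · rcases Finset.mem_insert.1 h with rfl | h
        · exact hjL
        · exact hsub (by simp [h])
    set C : Set Ω := ⋂ _x ∈ TA, A with hC
    set R : Set Ω := ⋂ i ∈ s, (B i)ᶜ with hR
    set D : Set Ω := ⋂ i ∈ T', B i with hD
    set X : Set Ω := C ∩ (R ∩ D) with hX
    have hset1 : C ∩ ((⋂ i ∈ insert j s, (B i)ᶜ) ∩ D) = X \ B j := by
      rw [Finset.set_biInter_insert]
      ext x
      simp only [hX, Set.mem_inter_iff, Set.mem_diff, Set.mem_compl_iff]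
      tauto
    have hset2 : X ∩ B j = C ∩ (R ∩ ⋂ i ∈ insert j T', B i) := by
      rw [Finset.set_biInter_insert]
      ext x
      simp only [hX, Set.mem_inter_iff]
      tauto
    have hmeas : P (X ∩ B j) + P (X \ B j) = P X :=
      measure_inter_add_diff X (hB j hjL)
    have hfin1 : P (X ∩ B j) ≠ ⊤ := measure_ne_top _ _
    have hfin2 : P (X \ B j) ≠ ⊤ := measure_ne_top _ _
    have htr : (P (X ∩ B j)).toReal + (P (X \ B j)).toReal = (P X).toReal := by
      rw [← ENNReal.toReal_add hfin1 hfin2, hmeas]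
    have ih1 := ih T' hds hsub1
    have ih2 := ih (insert j T') hds' hsub2
    have hPX : (P X).toReal =
        (∏ _x ∈ TA, (P A).toReal) * (∏ i ∈ s, (1 - (P (B i)).toReal)) *
          ∏ i ∈ T', (P (B i)).toReal := ih1
    have hPXB : (P (X ∩ B j)).toReal =
        (∏ _x ∈ TA, (P A).toReal) * (∏ i ∈ s, (1 - (P (B i)).toReal)) *
          ((P (B j)).toReal * ∏ i ∈ T', (P (B i)).toReal) := by
      rw [hset2]
      rw [ih2, Finset.prod_insert hjT']
    rw [hset1]
    rw [Finset.prod_insert hj]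
    have : (P (X \ B j)).toReal = (P X).toReal - (P (X ∩ B j)).toReal := by
      linarith
    rw [this, hPX, hPXB]
    ring

private lemma aux_compl {Ω ι : Type*} [MeasurableSpace Ω] [DecidableEq ι]
    (P : Measure Ω) [IsProbabilityMeasure P] (A : Set Ω) (hA : MeasurableSet A)
    (B : ι → Set Ω) (L : Finset ι)
    (hB : ∀ i ∈ L, MeasurableSet (B i))
    (hindep : ∀ (TA : Finset Unit), ∀ T ⊆ L,
      (P ((⋂ _x ∈ TA, A) ∩ ⋂ i ∈ T, B i)).toReal =
        (∏ _x ∈ TA, (P A).toReal) * ∏ i ∈ T, (P (B i)).toReal)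
    (T : Finset ι) (hT : T ⊆ L) :
    (P (Aᶜ ∩ ⋂ i ∈ T, (B i)ᶜ)).toReal =
      (1 - (P A).toReal) * ∏ i ∈ T, (1 - (P (B i)).toReal) := by
  classical
  set R : Set Ω := ⋂ i ∈ T, (B i)ᶜ with hR
  have hTsub : T ∪ (∅ : Finset ι) ⊆ L := by simpa using hT
  have key0 := aux_key P A B L hB hindep ∅ T ∅ (Finset.disjoint_empty_right _) hTsub
  have key1 := aux_key P A B L hB hindep {()} T ∅ (Finset.disjoint_empty_right _) hTsub
  have hPR : (P R).toReal = ∏ i ∈ T, (1 - (P (B i)).toReal) := by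
    have hs : (⋂ _x ∈ (∅ : Finset Unit), A) ∩ (R ∩ ⋂ i ∈ (∅ : Finset ι), B i) = R := by
      simp [hR]
    rw [hs] at key0
    simpa using key0
  have hPAR : (P (R ∩ A)).toReal =
      (P A).toReal * ∏ i ∈ T, (1 - (P (B i)).toReal) := by
    have hs : (⋂ _x ∈ ({()} : Finset Unit), A) ∩ (R ∩ ⋂ i ∈ (∅ : Finset ι), B i) = R ∩ A := by
      ext x; simp [hR, Set.mem_inter_iff, and_comm]
    rw [hs] at key1
    simpa using key1
  have hset : Aᶜ ∩ R = R \ A := by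
    ext x; simp [Set.mem_diff, and_comm]
  have hmeas : P (R ∩ A) + P (R \ A) = P R := measure_inter_add_diff R hA
  have htr : (P (R ∩ A)).toReal + (P (R \ A)).toReal = (P R).toReal := by
    rw [← ENNReal.toReal_add (measure_ne_top _ _) (measure_ne_top _ _), hmeas]
  rw [hset]
  have : (P (R \ A)).toReal = (P R).toReal - (P (R ∩ A)).toReal := by linarith
  rw [this, hPR, hPAR]
  ring

theorem stmt_9 {Ω ι : Type*} [MeasurableSpace Ω] [DecidableEq ι]
    (P : Measure Ω) [IsProbabilityMeasure P]
    (A : Set Ω) (hA : MeasurableSet A)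
    (L1 L2 L3 : Finset ι) (h1 : L1.Nonempty) (h2 : L2.Nonempty) (h3 : L3.Nonempty)
    (h12 : Disjoint L1 L2) (h13 : Disjoint L1 L3) (h23 : Disjoint L2 L3)
    (B : ι → Set Ω) (hB : ∀ i ∈ L1 ∪ L2 ∪ L3, MeasurableSet (B i))
    (hindep : ∀ (TA : Finset Unit), ∀ T ⊆ L1 ∪ L2 ∪ L3,
      (P ((⋂ _x ∈ TA, A) ∩ ⋂ i ∈ T, B i)).toReal =
        (∏ _x ∈ TA, (P A).toReal) * ∏ i ∈ T, (P (B i)).toReal) :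
    (P (A ∪ ((⋃ i ∈ L1, B i) ∩ ⋃ i ∈ L2, B i) ∪ ⋃ i ∈ L3, B i)).toReal =
      1 - (1 - (P A).toReal) *
        (1 - (1 - ∏ i ∈ L1, (1 - (P (B i)).toReal)) *
             (1 - ∏ i ∈ L2, (1 - (P (B i)).toReal))) *
        ∏ i ∈ L3, (1 - (P (B i)).toReal) := by
  classical
  set L : Finset ι := L1 ∪ L2 ∪ L3 with hL
  set E : Set Ω := A ∪ ((⋃ i ∈ L1, B i) ∩ ⋃ i ∈ L2, B i) ∪ ⋃ i ∈ L3, B i with hE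
  -- measurability of E
  have hmE : MeasurableSet E := by
    apply MeasurableSet.union
    · apply MeasurableSet.union hA
      apply MeasurableSet.inter
      · exact Finset.measurableSet_biUnion _ fun i hi => hB i (by simp [hL, hi])
      · exact Finset.measurableSet_biUnion _ fun i hi => hB i (by simp [hL, hi])
    · exact Finset.measurableSet_biUnion _ fun i hi => hB i (by simp [hL, hi])
  -- complement sets
  set V1 : Set Ω := ⋂ i ∈ L1, (B i)ᶜ with hV1
  set V2 : Set Ω := ⋂ i ∈ L2, (B i)ᶜ with hV2
  set V3 : Set Ω := ⋂ i ∈ L3, (B i)ᶜ with hV3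
  have hEc : Eᶜ = (Aᶜ ∩ (V1 ∩ V3)) ∪ (Aᶜ ∩ (V2 ∩ V3)) := by
    ext x
    simp only [hE, hV1, hV2, hV3, Set.mem_compl_iff, Set.mem_union, Set.mem_inter_iff,
      Set.mem_iUnion, Set.mem_iInter, exists_prop, not_or, not_and, not_exists]
    constructor
    · rintro ⟨⟨hxA, himp⟩, h3'⟩
      by_cases hu : ∃ i ∈ L1, x ∈ B i
      · exact Or.inr ⟨hxA, himp hu, h3'⟩
      · push_neg at hu
        exact Or.inl ⟨hxA, hu, h3'⟩
    · rintro (⟨hxA, hq, h3'⟩ | ⟨hxA, hq, h3'⟩)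
      · refine ⟨⟨hxA, fun hex => absurd hex ?_⟩, h3'⟩
        push_neg
        exact hq
      · exact ⟨⟨hxA, fun _ => hq⟩, h3'⟩
  have haux := aux_compl P A hA B L hB hindep
  have hq13 : (⋂ i ∈ L1 ∪ L3, (B i)ᶜ) = V1 ∩ V3 := by
    ext x
    simp only [hV1, hV3, Set.mem_iInter, Set.mem_inter_iff, Finset.mem_union]
    constructor
    · intro h; exact ⟨fun i hi => h i (Or.inl hi), fun i hi => h i (Or.inr hi)⟩
    · rintro ⟨ha, hb⟩ i hi; rcases hi with hi | hi; exacts [ha i hi, hb i hi]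
  have hq23 : (⋂ i ∈ L2 ∪ L3, (B i)ᶜ) = V2 ∩ V3 := by
    ext x
    simp only [hV2, hV3, Set.mem_iInter, Set.mem_inter_iff, Finset.mem_union]
    constructor
    · intro h; exact ⟨fun i hi => h i (Or.inl hi), fun i hi => h i (Or.inr hi)⟩
    · rintro ⟨ha, hb⟩ i hi; rcases hi with hi | hi; exacts [ha i hi, hb i hi]
  have hq123 : (⋂ i ∈ L1 ∪ L2 ∪ L3, (B i)ᶜ) = V1 ∩ V2 ∩ V3 := by
    ext x
    simp only [hV1, hV2, hV3, Set.mem_iInter, Set.mem_inter_iff, Finset.mem_union]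
    constructor
    · intro h
      exact ⟨⟨fun i hi => h i (Or.inl (Or.inl hi)), fun i hi => h i (Or.inl (Or.inr hi))⟩,
        fun i hi => h i (Or.inr hi)⟩
    · rintro ⟨⟨ha, hb⟩, hc⟩ i hi
      rcases hi with (hi | hi) | hi
      exacts [ha i hi, hb i hi, hc i hi]
  have h13sub : L1 ∪ L3 ⊆ L := fun a ha => by
    rcases Finset.mem_union.1 ha with h | h
    · exact Finset.mem_union.2 (Or.inl (Finset.mem_union.2 (Or.inl h)))
    · exact Finset.mem_union.2 (Or.inr h)
  have h23sub : L2 ∪ L3 ⊆ L := fun a ha => by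
    rcases Finset.mem_union.1 ha with h | h
    · exact Finset.mem_union.2 (Or.inl (Finset.mem_union.2 (Or.inr h)))
    · exact Finset.mem_union.2 (Or.inr h)
  have e1 : (P (Aᶜ ∩ (V1 ∩ V3))).toReal =
      (1 - (P A).toReal) *
        ((∏ i ∈ L1, (1 - (P (B i)).toReal)) * ∏ i ∈ L3, (1 - (P (B i)).toReal)) := by
    have := haux (L1 ∪ L3) h13sub
    rw [hq13, Finset.prod_union h13] at this
    exact this
  have e2 : (P (Aᶜ ∩ (V2 ∩ V3))).toReal =
      (1 - (P A).toReal) *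
        ((∏ i ∈ L2, (1 - (P (B i)).toReal)) * ∏ i ∈ L3, (1 - (P (B i)).toReal)) := by
    have := haux (L2 ∪ L3) h23sub
    rw [hq23, Finset.prod_union h23] at this
    exact this
  have h1213 : Disjoint (L1 ∪ L2) L3 := Finset.disjoint_union_left.2 ⟨h13, h23⟩
  have e3 : (P (Aᶜ ∩ (V1 ∩ V2 ∩ V3))).toReal =
      (1 - (P A).toReal) *
        ((∏ i ∈ L1, (1 - (P (B i)).toReal)) * (∏ i ∈ L2, (1 - (P (B i)).toReal)) *
          ∏ i ∈ L3, (1 - (P (B i)).toReal)) := by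
    have := haux (L1 ∪ L2 ∪ L3) (le_refl _)
    rw [hq123, Finset.prod_union h1213, Finset.prod_union h12] at this
    linear_combination this
  have hinter : (Aᶜ ∩ (V1 ∩ V3)) ∩ (Aᶜ ∩ (V2 ∩ V3)) = Aᶜ ∩ (V1 ∩ V2 ∩ V3) := by
    ext x
    simp only [Set.mem_inter_iff]
    tauto
  have hui : P ((Aᶜ ∩ (V1 ∩ V3)) ∪ (Aᶜ ∩ (V2 ∩ V3))) +
      P ((Aᶜ ∩ (V1 ∩ V3)) ∩ (Aᶜ ∩ (V2 ∩ V3))) =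
      P (Aᶜ ∩ (V1 ∩ V3)) + P (Aᶜ ∩ (V2 ∩ V3)) := by
    apply measure_union_add_inter
    apply MeasurableSet.inter hA.compl
    apply MeasurableSet.inter
    · exact Finset.measurableSet_biInter _ fun i hi => (hB i (by simp [hL, hi])).compl
    · exact Finset.measurableSet_biInter _ fun i hi => (hB i (by simp [hL, hi])).compl
  have htR : (P ((Aᶜ ∩ (V1 ∩ V3)) ∪ (Aᶜ ∩ (V2 ∩ V3)))).toReal +
      (P ((Aᶜ ∩ (V1 ∩ V3)) ∩ (Aᶜ ∩ (V2 ∩ V3)))).toReal =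
      (P (Aᶜ ∩ (V1 ∩ V3))).toReal + (P (Aᶜ ∩ (V2 ∩ V3))).toReal := by
    rw [← ENNReal.toReal_add (measure_ne_top _ _) (measure_ne_top _ _),
      ← ENNReal.toReal_add (measure_ne_top _ _) (measure_ne_top _ _), hui]
  rw [hinter] at htR
  have hcompl : (P E).toReal = 1 - (P Eᶜ).toReal := by
    have h := prob_compl_eq_one_sub (μ := P) hmE
    rw [h, ENNReal.toReal_sub_of_le prob_le_one ENNReal.one_ne_top]
    simp
  rw [hcompl, hEc]
  rw [e1, e2, e3] at htR
  have : (P ((Aᶜ ∩ (V1 ∩ V3)) ∪ (Aᶜ ∩ (V2 ∩ V3)))).toReal =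
      (1 - (P A).toReal) *
        ((∏ i ∈ L1, (1 - (P (B i)).toReal)) * ∏ i ∈ L3, (1 - (P (B i)).toReal)) +
      (1 - (P A).toReal) *
        ((∏ i ∈ L2, (1 - (P (B i)).toReal)) * ∏ i ∈ L3, (1 - (P (B i)).toReal)) -
      (1 - (P A).toReal) *
        ((∏ i ∈ L1, (1 - (P (B i)).toReal)) * (∏ i ∈ L2, (1 - (P (B i)).toReal)) *
          ∏ i ∈ L3, (1 - (P (B i)).toReal)) := by linarith
  rw [this]
  ring
end

section
/- Let (Ω, P) be a probability space with event A and finite nonempty pairwise-disjoint index sets L₁, L₂, L₃ with events Bᵢ, such that A together with all Bᵢ is mutually independent. Then P(A ∩ ((⋂_{i∈L₁} Bᵢ) ∪ (⋂_{i∈L₂} Bᵢ)) ∩ ⋂_{i∈L₃} Bᵢ) = P(A) · ∏_{i∈L₃} P(Bᵢ) · (1 - (1 - ∏_{i∈L₁} P(Bᵢ)) · (1 - ∏_{i∈L₂} P(Bᵢ))). -/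
open MeasureTheory Finset

theorem stmt_10 {Ω ι : Type*} [MeasurableSpace Ω] [DecidableEq ι]
    (P : Measure Ω) [IsProbabilityMeasure P]
    (A : Set Ω) (hA : MeasurableSet A)
    (L1 L2 L3 : Finset ι) (h1 : L1.Nonempty) (h2 : L2.Nonempty) (h3 : L3.Nonempty)
    (h12 : Disjoint L1 L2) (h13 : Disjoint L1 L3) (h23 : Disjoint L2 L3)
    (B : ι → Set Ω) (hB : ∀ i ∈ L1 ∪ L2 ∪ L3, MeasurableSet (B i))
    (hindep : ∀ (TA : Finset Unit), ∀ T ⊆ L1 ∪ L2 ∪ L3,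
      (P ((⋂ _x ∈ TA, A) ∩ ⋂ i ∈ T, B i)).toReal =
        (∏ _x ∈ TA, (P A).toReal) * ∏ i ∈ T, (P (B i)).toReal) :
    (P (A ∩ ((⋂ i ∈ L1, B i) ∪ ⋂ i ∈ L2, B i) ∩ ⋂ i ∈ L3, B i)).toReal =
      (P A).toReal * (∏ i ∈ L3, (P (B i)).toReal) *
        (1 - (1 - ∏ i ∈ L1, (P (B i)).toReal) * (1 - ∏ i ∈ L2, (P (B i)).toReal)) := by
  classical
  set C1 := ⋂ i ∈ L1, B i with hC1def
  set C2 := ⋂ i ∈ L2, B i with hC2def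
  set C3 := ⋂ i ∈ L3, B i with hC3def
  have key : ∀ T ⊆ L1 ∪ L2 ∪ L3,
      (P (A ∩ ⋂ i ∈ T, B i)).toReal = (P A).toReal * ∏ i ∈ T, (P (B i)).toReal := by
    intro T hT
    have := hindep {()} T hT
    simpa [Set.iInter_const] using this
  have hmB : ∀ (T : Finset ι), T ⊆ L1 ∪ L2 ∪ L3 → MeasurableSet (⋂ i ∈ T, B i) := by
    intro T hT
    exact MeasurableSet.biInter T.countable_toSet (fun i hi => hB i (hT hi))
  have hs13 : (L1 : Finset ι) ∪ L3 ⊆ L1 ∪ L2 ∪ L3 := by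
    intro x hx; simp only [Finset.mem_union] at *; tauto
  have hs23 : (L2 : Finset ι) ∪ L3 ⊆ L1 ∪ L2 ∪ L3 := by
    intro x hx; simp only [Finset.mem_union] at *; tauto
  have e13 : A ∩ C1 ∩ C3 = A ∩ ⋂ i ∈ L1 ∪ L3, B i := by
    ext x
    simp only [Set.mem_inter_iff, hC1def, hC3def, Set.mem_iInter, Finset.mem_union]
    constructor
    · rintro ⟨⟨hxA, h1x⟩, h3x⟩
      exact ⟨hxA, fun i hi => hi.elim (h1x i) (h3x i)⟩
    · rintro ⟨hxA, h⟩
      exact ⟨⟨hxA, fun i hi => h i (Or.inl hi)⟩, fun i hi => h i (Or.inr hi)⟩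
  have e23 : A ∩ C2 ∩ C3 = A ∩ ⋂ i ∈ L2 ∪ L3, B i := by
    ext x
    simp only [Set.mem_inter_iff, hC2def, hC3def, Set.mem_iInter, Finset.mem_union]
    constructor
    · rintro ⟨⟨hxA, h2x⟩, h3x⟩
      exact ⟨hxA, fun i hi => hi.elim (h2x i) (h3x i)⟩
    · rintro ⟨hxA, h⟩
      exact ⟨⟨hxA, fun i hi => h i (Or.inl hi)⟩, fun i hi => h i (Or.inr hi)⟩
  have e123 : (A ∩ C1 ∩ C3) ∩ (A ∩ C2 ∩ C3) = A ∩ ⋂ i ∈ L1 ∪ L2 ∪ L3, B i := by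
    ext x
    simp only [Set.mem_inter_iff, hC1def, hC2def, hC3def, Set.mem_iInter, Finset.mem_union]
    constructor
    · rintro ⟨⟨⟨hxA, h1x⟩, h3x⟩, ⟨_, h2x⟩, _⟩
      exact ⟨hxA, fun i hi => hi.elim (fun h => h.elim (h1x i) (h2x i)) (h3x i)⟩
    · rintro ⟨hxA, h⟩
      exact ⟨⟨⟨hxA, fun i hi => h i (Or.inl (Or.inl hi))⟩, fun i hi => h i (Or.inr hi)⟩,
        ⟨hxA, fun i hi => h i (Or.inl (Or.inr hi))⟩, fun i hi => h i (Or.inr hi)⟩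
  have eunion : A ∩ (C1 ∪ C2) ∩ C3 = (A ∩ C1 ∩ C3) ∪ (A ∩ C2 ∩ C3) := by
    ext x; simp only [Set.mem_inter_iff, Set.mem_union]; tauto
  have hm1 : MeasurableSet (A ∩ C1 ∩ C3) := by
    rw [e13]; exact hA.inter (hmB _ hs13)
  have hm2 : MeasurableSet (A ∩ C2 ∩ C3) := by
    rw [e23]; exact hA.inter (hmB _ hs23)
  have hadd := measure_union_add_inter (μ := P) (A ∩ C1 ∩ C3) hm2
  have hfin : ∀ s : Set Ω, P s ≠ ⊤ := fun s => measure_ne_top P s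
  have hadd' : (P ((A ∩ C1 ∩ C3) ∪ (A ∩ C2 ∩ C3))).toReal
      + (P ((A ∩ C1 ∩ C3) ∩ (A ∩ C2 ∩ C3))).toReal
      = (P (A ∩ C1 ∩ C3)).toReal + (P (A ∩ C2 ∩ C3)).toReal := by
    rw [← ENNReal.toReal_add (hfin _) (hfin _), ← ENNReal.toReal_add (hfin _) (hfin _), hadd]
  have v13 : (P (A ∩ C1 ∩ C3)).toReal
      = (P A).toReal * ((∏ i ∈ L1, (P (B i)).toReal) * ∏ i ∈ L3, (P (B i)).toReal) := by
    rw [e13, key _ hs13, Finset.prod_union h13]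
  have v23 : (P (A ∩ C2 ∩ C3)).toReal
      = (P A).toReal * ((∏ i ∈ L2, (P (B i)).toReal) * ∏ i ∈ L3, (P (B i)).toReal) := by
    rw [e23, key _ hs23, Finset.prod_union h23]
  have v123 : (P ((A ∩ C1 ∩ C3) ∩ (A ∩ C2 ∩ C3))).toReal
      = (P A).toReal * ((∏ i ∈ L1, (P (B i)).toReal) * (∏ i ∈ L2, (P (B i)).toReal)
          * ∏ i ∈ L3, (P (B i)).toReal) := by
    rw [e123, key _ (subset_refl _), Finset.prod_union (by
      rw [Finset.disjoint_union_left]; exact ⟨h13, h23⟩), Finset.prod_union h12]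
  rw [eunion]
  have : (P ((A ∩ C1 ∩ C3) ∪ (A ∩ C2 ∩ C3))).toReal
      = (P (A ∩ C1 ∩ C3)).toReal + (P (A ∩ C2 ∩ C3)).toReal
        - (P ((A ∩ C1 ∩ C3) ∩ (A ∩ C2 ∩ C3))).toReal := by linarith
  rw [this, v13, v23, v123]
  ring
end

section
/- Let (Ω, P) be a probability space. Let A be an event, L₁, L₂, L₃, L₄ finite nonempty pairwise-disjoint index sets with events Bᵢ, and L a finite index set with pairs of events C_j, D_j, all mutually independent. Then P(A ∩ (⋂_{i∈L₁}Bᵢ) ∩ ((⋂_{i∈L₂}Bᵢ) ∪ (⋂_{i∈L₃}Bᵢ)) ∩ (⋂_{i∈L₄}Bᵢ) ∩ ⋂_{j∈L}(C_j ∪ D_j)) = P(A) · ∏_{i∈L₁}P(Bᵢ) · (1 - (1-∏_{i∈L₂}P(Bᵢ))·(1-∏_{i∈L₃}P(Bᵢ))) · ∏_{i∈L₄}P(Bᵢ) · ∏_{j∈L}(1 - (1-P(C_j))·(1-P(D_j))). -/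
open MeasureTheory Finset

lemma stmt_14_biInter_union {α β : Type*} [DecidableEq α] (s t : Finset α) (f : α → Set β) :
    ⋂ i ∈ s ∪ t, f i = (⋂ i ∈ s, f i) ∩ ⋂ i ∈ t, f i := by
  ext x; simp [Finset.mem_union, or_imp, forall_and]

lemma stmt_14_union_eq {β : Type*} (X I1 I2 I3 I4 F : Set β) :
    X ∩ I1 ∩ (I2 ∪ I3) ∩ I4 ∩ F = (X ∩ ((I1 ∩ I2) ∩ I4) ∩ F) ∪ (X ∩ ((I1 ∩ I3) ∩ I4) ∩ F) := by
  ext x; simp only [Set.mem_inter_iff, Set.mem_union]; tauto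

lemma stmt_14_cap_eq {β : Type*} (X I1 I2 I3 I4 F : Set β) :
    (X ∩ ((I1 ∩ I2) ∩ I4) ∩ F) ∩ (X ∩ ((I1 ∩ I3) ∩ I4) ∩ F) = X ∩ (((I1 ∩ I2) ∩ I3) ∩ I4) ∩ F := by
  ext x; simp only [Set.mem_inter_iff]; tauto

lemma stmt_14_ie {Ω : Type*} [MeasurableSpace Ω] (P : Measure Ω) [IsProbabilityMeasure P]
    {s t : Set Ω} (ht : MeasurableSet t) :
    (P (s ∪ t)).toReal = (P s).toReal + (P t).toReal - (P (s ∩ t)).toReal := by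
  have h := measure_union_add_inter (μ := P) s ht
  have h1 : P (s ∪ t) ≠ ⊤ := measure_ne_top _ _
  have h2 : P (s ∩ t) ≠ ⊤ := measure_ne_top _ _
  have h3 : P s ≠ ⊤ := measure_ne_top _ _
  have h4 : P t ≠ ⊤ := measure_ne_top _ _
  have := congrArg ENNReal.toReal h
  rw [ENNReal.toReal_add h1 h2, ENNReal.toReal_add h3 h4] at this
  linarith

set_option maxHeartbeats 1000000 in
theorem stmt_14 {Ω ι κ : Type*} [MeasurableSpace Ω] [DecidableEq ι]
    (P : Measure Ω) [IsProbabilityMeasure P]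
    (A : Set Ω) (hA : MeasurableSet A)
    (L1 L2 L3 L4 : Finset ι)
    (h1 : L1.Nonempty) (h2 : L2.Nonempty) (h3 : L3.Nonempty) (h4 : L4.Nonempty)
    (h12 : Disjoint L1 L2) (h13 : Disjoint L1 L3) (h14 : Disjoint L1 L4)
    (h23 : Disjoint L2 L3) (h24 : Disjoint L2 L4) (h34 : Disjoint L3 L4)
    (B : ι → Set Ω) (hB : ∀ i ∈ L1 ∪ L2 ∪ L3 ∪ L4, MeasurableSet (B i))
    (L : Finset κ) (C D : κ → Set Ω)
    (hCmeas : ∀ j ∈ L, MeasurableSet (C j)) (hDmeas : ∀ j ∈ L, MeasurableSet (D j))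
    (hindep : ∀ (TA : Finset Unit), ∀ T ⊆ L1 ∪ L2 ∪ L3 ∪ L4, ∀ U ⊆ L, ∀ V ⊆ L,
      (P ((⋂ _x ∈ TA, A) ∩ (⋂ i ∈ T, B i) ∩ (⋂ j ∈ U, C j) ∩ ⋂ j ∈ V, D j)).toReal =
        (∏ _x ∈ TA, (P A).toReal) * (∏ i ∈ T, (P (B i)).toReal) *
          (∏ j ∈ U, (P (C j)).toReal) * ∏ j ∈ V, (P (D j)).toReal) :
    (P (A ∩ (⋂ i ∈ L1, B i) ∩ ((⋂ i ∈ L2, B i) ∪ ⋂ i ∈ L3, B i) ∩ (⋂ i ∈ L4, B i) ∩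
        ⋂ j ∈ L, (C j ∪ D j))).toReal =
      (P A).toReal * (∏ i ∈ L1, (P (B i)).toReal) *
        (1 - (1 - ∏ i ∈ L2, (P (B i)).toReal) * (1 - ∏ i ∈ L3, (P (B i)).toReal)) *
        (∏ i ∈ L4, (P (B i)).toReal) *
        ∏ j ∈ L, (1 - (1 - (P (C j)).toReal) * (1 - (P (D j)).toReal)) := by
  classical
  -- measurability helpers
  have hAmeas : ∀ (TA : Finset Unit), MeasurableSet (⋂ _x ∈ TA, A) :=
    fun TA => Finset.measurableSet_biInter TA (fun _ _ => hA)
  have hBmeas : ∀ T ⊆ L1 ∪ L2 ∪ L3 ∪ L4, MeasurableSet (⋂ i ∈ T, B i) :=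
    fun T hT => Finset.measurableSet_biInter T (fun i hi => hB i (hT hi))
  have hCU : ∀ U ⊆ L, MeasurableSet (⋂ j ∈ U, C j) :=
    fun U hU => Finset.measurableSet_biInter U (fun j hj => hCmeas j (hU hj))
  have hDU : ∀ V ⊆ L, MeasurableSet (⋂ j ∈ V, D j) :=
    fun V hV => Finset.measurableSet_biInter V (fun j hj => hDmeas j (hV hj))
  -- main induction over subsets S of L
  have key : ∀ (S : Finset κ), S ⊆ L → ∀ (TA : Finset Unit),
      ∀ T ⊆ L1 ∪ L2 ∪ L3 ∪ L4, ∀ U ⊆ L, ∀ V ⊆ L, Disjoint U S → Disjoint V S →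
      (P ((⋂ _x ∈ TA, A) ∩ (⋂ i ∈ T, B i) ∩ (⋂ j ∈ U, C j) ∩ (⋂ j ∈ V, D j) ∩
          ⋂ j ∈ S, (C j ∪ D j))).toReal =
        (∏ _x ∈ TA, (P A).toReal) * (∏ i ∈ T, (P (B i)).toReal) *
          (∏ j ∈ U, (P (C j)).toReal) * (∏ j ∈ V, (P (D j)).toReal) *
          ∏ j ∈ S, (1 - (1 - (P (C j)).toReal) * (1 - (P (D j)).toReal)) := by
    intro S
    induction S using Finset.induction_on with
    | empty =>
        intro _ TA T hT U hU V hV _ _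
        simp only [Finset.notMem_empty, Set.iInter_of_empty, Set.iInter_univ,
          Set.inter_univ, Finset.prod_empty, mul_one]
        exact hindep TA T hT U hU V hV
    | insert j S hj IH =>
        intro hSL TA T hT U hU V hV hUS hVS
        have hjL : j ∈ L := hSL (Finset.mem_insert_self j S)
        have hSL' : S ⊆ L := fun x hx => hSL (Finset.mem_insert_of_mem hx)
        obtain ⟨hjU, hUS'⟩ := Finset.disjoint_insert_right.mp hUS
        obtain ⟨hjV, hVS'⟩ := Finset.disjoint_insert_right.mp hVS
        have hU' : insert j U ⊆ L := Finset.insert_subset hjL hU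
        have hV' : insert j V ⊆ L := Finset.insert_subset hjL hV
        have hUS2 : Disjoint (insert j U) S := Finset.disjoint_insert_left.mpr ⟨hj, hUS'⟩
        have hVS2 : Disjoint (insert j V) S := Finset.disjoint_insert_left.mpr ⟨hj, hVS'⟩
        set E1 := (⋂ _x ∈ TA, A) ∩ (⋂ i ∈ T, B i) ∩ (⋂ j' ∈ insert j U, C j') ∩
          (⋂ j' ∈ V, D j') ∩ ⋂ j' ∈ S, (C j' ∪ D j') with hE1
        set E2 := (⋂ _x ∈ TA, A) ∩ (⋂ i ∈ T, B i) ∩ (⋂ j' ∈ U, C j') ∩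
          (⋂ j' ∈ insert j V, D j') ∩ ⋂ j' ∈ S, (C j' ∪ D j') with hE2
        have hun : (⋂ _x ∈ TA, A) ∩ (⋂ i ∈ T, B i) ∩ (⋂ j' ∈ U, C j') ∩
            (⋂ j' ∈ V, D j') ∩ ⋂ j' ∈ insert j S, (C j' ∪ D j') = E1 ∪ E2 := by
          rw [hE1, hE2, Finset.set_biInter_insert, Finset.set_biInter_insert,
            Finset.set_biInter_insert]
          ext x
          simp only [Set.mem_inter_iff, Set.mem_union]
          tauto
        have hcap : E1 ∩ E2 = (⋂ _x ∈ TA, A) ∩ (⋂ i ∈ T, B i) ∩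
            (⋂ j' ∈ insert j U, C j') ∩ (⋂ j' ∈ insert j V, D j') ∩
            ⋂ j' ∈ S, (C j' ∪ D j') := by
          rw [hE1, hE2, Finset.set_biInter_insert, Finset.set_biInter_insert]
          ext x
          simp only [Set.mem_inter_iff]
          tauto
        have hE2m : MeasurableSet E2 := by
          rw [hE2]
          refine ((((hAmeas TA).inter (hBmeas T hT)).inter (hCU U hU)).inter
            (hDU _ hV')).inter ?_
          exact Finset.measurableSet_biInter S
            (fun j' hj' => (hCmeas j' (hSL' hj')).union (hDmeas j' (hSL' hj')))
        rw [hun, stmt_14_ie P hE2m, hcap,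
          IH hSL' TA T hT (insert j U) hU' V hV hUS2 hVS',
          IH hSL' TA T hT U hU (insert j V) hV' hUS' hVS2,
          IH hSL' TA T hT (insert j U) hU' (insert j V) hV' hUS2 hVS2,
          Finset.prod_insert hjU, Finset.prod_insert hjV, Finset.prod_insert hj]
        ring
  -- specialization: U = V = ∅
  have key2 : ∀ (TA : Finset Unit), ∀ T ⊆ L1 ∪ L2 ∪ L3 ∪ L4,
      (P ((⋂ _x ∈ TA, A) ∩ (⋂ i ∈ T, B i) ∩ ⋂ j ∈ L, (C j ∪ D j))).toReal =
        (∏ _x ∈ TA, (P A).toReal) * (∏ i ∈ T, (P (B i)).toReal) *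
          ∏ j ∈ L, (1 - (1 - (P (C j)).toReal) * (1 - (P (D j)).toReal)) := by
    intro TA T hT
    have := key L (le_refl L) TA T hT ∅ (Finset.empty_subset L) ∅ (Finset.empty_subset L)
      (Finset.disjoint_left.mpr (by simp)) (Finset.disjoint_left.mpr (by simp))
    simpa using this
  -- now inclusion-exclusion for the L2 / L3 union
  have hT24 : L1 ∪ L2 ∪ L4 ⊆ L1 ∪ L2 ∪ L3 ∪ L4 := by
    intro x hx; simp only [Finset.mem_union] at hx ⊢; tauto
  have hT34 : L1 ∪ L3 ∪ L4 ⊆ L1 ∪ L2 ∪ L3 ∪ L4 := by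
    intro x hx; simp only [Finset.mem_union] at hx ⊢; tauto
  have hTall : L1 ∪ L2 ∪ L3 ∪ L4 ⊆ L1 ∪ L2 ∪ L3 ∪ L4 := le_refl _
  set FL := ⋂ j ∈ L, (C j ∪ D j) with hFL
  set G2 := (⋂ _x ∈ ({()} : Finset Unit), A) ∩ (⋂ i ∈ L1 ∪ L2 ∪ L4, B i) ∩ FL with hG2
  set G3 := (⋂ _x ∈ ({()} : Finset Unit), A) ∩ (⋂ i ∈ L1 ∪ L3 ∪ L4, B i) ∩ FL with hG3
  have hun : A ∩ (⋂ i ∈ L1, B i) ∩ ((⋂ i ∈ L2, B i) ∪ ⋂ i ∈ L3, B i) ∩ (⋂ i ∈ L4, B i) ∩ FL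
      = G2 ∪ G3 := by
    rw [hG2, hG3]
    simp only [stmt_14_biInter_union, Finset.set_biInter_singleton]
    exact stmt_14_union_eq _ _ _ _ _ _
  have hcap : G2 ∩ G3 = (⋂ _x ∈ ({()} : Finset Unit), A) ∩
      (⋂ i ∈ L1 ∪ L2 ∪ L3 ∪ L4, B i) ∩ FL := by
    rw [hG2, hG3]
    simp only [stmt_14_biInter_union]
    exact stmt_14_cap_eq _ _ _ _ _ _
  have hG3m : MeasurableSet G3 := by
    rw [hG3]
    refine ((hAmeas _).inter (hBmeas _ hT34)).inter ?_
    exact Finset.measurableSet_biInter L (fun j hj => (hCmeas j hj).union (hDmeas j hj))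
  rw [hun, stmt_14_ie P hG3m, hcap, key2 _ _ hT24, key2 _ _ hT34, key2 _ _ hTall]
  have d124 : Disjoint (L1 ∪ L2) L4 := Finset.disjoint_union_left.mpr ⟨h14, h24⟩
  have d134 : Disjoint (L1 ∪ L3) L4 := Finset.disjoint_union_left.mpr ⟨h14, h34⟩
  have d123 : Disjoint (L1 ∪ L2) L3 := Finset.disjoint_union_left.mpr ⟨h13, h23⟩
  have d1234 : Disjoint (L1 ∪ L2 ∪ L3) L4 :=
    Finset.disjoint_union_left.mpr ⟨d124, h34⟩
  rw [Finset.prod_union d124, Finset.prod_union h12, Finset.prod_union d134,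
    Finset.prod_union h13, Finset.prod_union d1234, Finset.prod_union d123,
    Finset.prod_union h12, Finset.prod_singleton]
  ring
end
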